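/- Let u, v be strings over alphabet Σ₁ and u', v' strings over alphabet Σ₂ with Σ₁ ∩ Σ₂ = ∅. Then LCS(u ∘ u', v' ∘ v) = max(LCS(u, v), LCS(u', v')). -/

import Mathlib

/-- Length of a longest common subsequence of two strings (lists over ℕ). -/
noncomputable def LCS (x y : List ℕ) : ℕ :=
  sSup {k | ∃ s : List ℕ, s.Sublist x ∧ s.Sublist y ∧ s.length = k}

/-- Ulam distance between permutations, via `d_U(σ,τ) = |σ| − LCS(σ,τ)`. -/
noncomputable def ulamDist (x y : List ℕ) : ℕ := x.length - LCS x y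

/-- `π` is a permutation of `[n] = {1,…,n}` viewed as a string. -/
def IsPermOf (n : ℕ) (π : List ℕ) : Prop := π.Perm (List.range' 1 n)

lemma lcs_set_nonempty (x y : List ℕ) :
    {k | ∃ s : List ℕ, s.Sublist x ∧ s.Sublist y ∧ s.length = k}.Nonempty :=
  ⟨0, [], List.nil_sublist _, List.nil_sublist _, rfl⟩

lemma lcs_set_bdd (x y : List ℕ) :
    BddAbove {k | ∃ s : List ℕ, s.Sublist x ∧ s.Sublist y ∧ s.length = k} :=
  ⟨x.length, fun k ⟨s, hx, _, hk⟩ => hk ▸ hx.length_le⟩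

theorem lcs_crossed_append_disjoint (S1 S2 : Set ℕ) (hdisj : Disjoint S1 S2)
    (u v u' v' : List ℕ)
    (hu : ∀ c ∈ u, c ∈ S1) (hv : ∀ c ∈ v, c ∈ S1)
    (hu' : ∀ c ∈ u', c ∈ S2) (hv' : ∀ c ∈ v', c ∈ S2) :
    LCS (u ++ u') (v' ++ v) = max (LCS u v) (LCS u' v') := by
  have hset : {k | ∃ s : List ℕ, s.Sublist (u ++ u') ∧ s.Sublist (v' ++ v) ∧ s.length = k}
      = {k | ∃ s : List ℕ, s.Sublist u ∧ s.Sublist v ∧ s.length = k}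
      ∪ {k | ∃ s : List ℕ, s.Sublist u' ∧ s.Sublist v' ∧ s.length = k} := by
    ext k
    constructor
    · rintro ⟨s, h1, h2, rfl⟩
      rw [List.sublist_append_iff] at h1 h2
      obtain ⟨s1, s2, rfl, hs1, hs2⟩ := h1
      obtain ⟨t1, t2, heq, ht1, ht2⟩ := h2
      cases t1 with
      | nil =>
        simp only [List.nil_append] at heq
        -- t2 = s1 ++ s2, elements of t2 ∈ S1
        have hs2nil : s2 = [] := by
          rw [List.eq_nil_iff_forall_not_mem]
          intro a ha
          have haS2 : a ∈ S2 := hu' a (hs2.subset ha)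
          have haS1 : a ∈ S1 := hv a (ht2.subset (heq ▸ List.mem_append_right s1 ha))
          exact (Set.disjoint_left.mp hdisj haS1) haS2
        subst hs2nil
        left
        exact ⟨s1 ++ [], by simpa using hs1, by rw [heq]; exact ht2, rfl⟩
      | cons a rest =>
        have haS2 : a ∈ S2 := hv' a (ht1.subset List.mem_cons_self)
        cases s1 with
        | cons b bs =>
          exfalso
          have hb : b = a := by
            have := congrArg (fun l => l.headI) heq
            simpa using this
          have : b ∈ S1 := hu b (hs1.subset List.mem_cons_self)
          exact (Set.disjoint_left.mp hdisj this) (hb ▸ haS2)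
        | nil =>
          simp only [List.nil_append] at heq
          -- s2 = (a :: rest) ++ t2
          have ht2nil : t2 = [] := by
            rw [List.eq_nil_iff_forall_not_mem]
            intro c hc
            have hcS1 : c ∈ S1 := hv c (ht2.subset hc)
            have hcS2 : c ∈ S2 := hu' c (hs2.subset (heq ▸ List.mem_append_right _ hc))
            exact (Set.disjoint_left.mp hdisj hcS1) hcS2
          subst ht2nil
          right
          refine ⟨s2, hs2, ?_, by simp⟩
          rw [heq, List.append_nil]
          exact ht1
    · rintro (⟨s, h1, h2, rfl⟩ | ⟨s, h1, h2, rfl⟩)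
      · exact ⟨s, h1.trans (List.sublist_append_left u u'),
          h2.trans (List.sublist_append_right v' v), rfl⟩
      · exact ⟨s, h1.trans (List.sublist_append_right u u'),
          h2.trans (List.sublist_append_left v' v), rfl⟩
  unfold LCS
  rw [hset, csSup_union (lcs_set_bdd u v) (lcs_set_nonempty u v)
    (lcs_set_bdd u' v') (lcs_set_nonempty u' v')]
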